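/- arXiv:2403.04631 — 2 statements merged into one kernel-verified Lean document; each statement's English description precedes it below -/
import Mathlib

section
/- Let w(z,q) := z(1 − 2q z^{-2})^{1/2} as a formal power series in q with coefficients Laurent in z. For each n ≥ 0, Σ_{k≥0} (q^k/k!) · (2(n+k)−1)!!/z^{2(n+k)+1} = (2n−1)!!/w(z,q)^{2n+1}, i.e. the Galilean shift applied to the sequence a_n = (2n−1)!! z^{−(2n+1)} yields (2n−1)!! w(z,q)^{−(2n+1)}. -/
/-- `oddDF n = (2n−1)!!`, with the convention `(−1)!! = 1`. -/
def oddDF : ℕ → ℕ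
  | 0 => 1
  | n + 1 => (2 * n + 1) * oddDF n

private lemma oddDF_pos (n : ℕ) : 0 < oddDF n := by
  induction n with
  | zero => simp [oddDF]
  | succ n ih => simpa [oddDF] using ih

private lemma aux_re {z : ℝ} (hz : 0 < z) {w : ℂ}
    (hw : w ∈ Metric.ball (0:ℂ) (z^2/2)) :
    ((z:ℂ)^2 - 2*w) ∈ Complex.slitPlane := by
  rw [Complex.mem_slitPlane_iff]
  left
  have h1 : |w.re| ≤ ‖w‖ := Complex.abs_re_le_norm w
  have h2 : ‖w‖ < z^2/2 := by
    simpa [Complex.dist_eq] using hw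
  have h3 : w.re < z^2/2 := lt_of_le_of_lt (le_trans (le_abs_self _) h1) h2
  have hzc : ((z:ℂ)^2) = ((z^2:ℝ):ℂ) := by push_cast; ring
  rw [hzc]
  simp only [Complex.sub_re, Complex.ofReal_re, Complex.mul_re, Complex.re_ofNat,
    Complex.im_ofNat, zero_mul, sub_zero]
  linarith

private lemma aux_deriv {z : ℝ} (hz : 0 < z) (m : ℕ) {w : ℂ}
    (hw : w ∈ Metric.ball (0:ℂ) (z^2/2)) :
    HasDerivAt (fun w : ℂ => ((z:ℂ)^2 - 2*w) ^ (-(2*(m:ℂ)+1)/2))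
      ((2*(m:ℂ)+1) * ((z:ℂ)^2 - 2*w) ^ (-(2*((m:ℂ)+1)+1)/2)) w := by
  have hinner : HasDerivAt (fun w : ℂ => (z:ℂ)^2 - 2*w) (-2) w := by
    have h := ((hasDerivAt_id' w).const_mul (2:ℂ)).const_sub ((z:ℂ)^2)
    exact h.congr_deriv (by ring)
  have := hinner.cpow_const (c := (-(2*(m:ℂ)+1)/2)) (aux_re hz hw)
  convert this using 1
  have hexp : (-(2*(m:ℂ)+1)/2) - 1 = -(2*((m:ℂ)+1)+1)/2 := by ring
  rw [← hexp]
  ring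

private lemma aux_iter {z : ℝ} (hz : 0 < z) (n k : ℕ) {w : ℂ}
    (hw : w ∈ Metric.ball (0:ℂ) (z^2/2)) :
    iteratedDeriv k (fun w : ℂ => ((z:ℂ)^2 - 2*w) ^ (-(2*(n:ℂ)+1)/2)) w
      = ((oddDF (n+k) : ℂ) / (oddDF n : ℂ)) * ((z:ℂ)^2 - 2*w) ^ (-(2*((n:ℂ)+(k:ℂ))+1)/2) := by
  have hne : (oddDF n : ℂ) ≠ 0 := Nat.cast_ne_zero.mpr (oddDF_pos n).ne'
  induction k generalizing w with
  | zero => simp [div_self hne]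
  | succ k ih =>
    rw [iteratedDeriv_succ]
    have hEq : (iteratedDeriv k (fun w : ℂ => ((z:ℂ)^2 - 2*w) ^ (-(2*(n:ℂ)+1)/2)))
        =ᶠ[nhds w] (fun w => ((oddDF (n+k) : ℂ) / (oddDF n : ℂ)) *
          ((z:ℂ)^2 - 2*w) ^ (-(2*((n:ℂ)+(k:ℂ))+1)/2)) :=
      Filter.eventuallyEq_of_mem (Metric.isOpen_ball.mem_nhds hw) (fun x hx => ih hx)
    rw [hEq.deriv_eq]
    have hD := ((aux_deriv hz (n+k) hw).const_mul ((oddDF (n+k) : ℂ) / (oddDF n : ℂ)))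
    have hcast : ((n+k : ℕ) : ℂ) = (n:ℂ) + (k:ℂ) := by push_cast; ring
    rw [hcast] at hD
    rw [hD.deriv]
    have hodd : (oddDF (n+(k+1)) : ℂ) = (2*((n:ℂ)+(k:ℂ))+1) * (oddDF (n+k) : ℂ) := by
      have h : n + (k+1) = (n+k) + 1 := by ring
      rw [h, show oddDF ((n+k)+1) = (2*(n+k)+1) * oddDF (n+k) from rfl]
      push_cast; ring
    have hcast2 : (n:ℂ) + ((k:ℕ)+1 : ℕ) = (n:ℂ)+(k:ℂ)+1 := by push_cast; ring
    rw [hodd]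
    have : ((n:ℂ) + ((k+1:ℕ):ℂ)) = ((n:ℂ)+(k:ℂ))+1 := by push_cast; ring
    rw [this]
    field_simp

private lemma aux_cpow_pos {x : ℝ} (hx : 0 < x) (m : ℕ) :
    ((x:ℂ)) ^ (-(2*(m:ℂ)+1)/2) = ((1 / Real.sqrt x ^ (2*m+1) : ℝ) : ℂ) := by
  have hy : (-(2*(m:ℂ)+1)/2) = ((-(2*(m:ℝ)+1)/2 : ℝ) : ℂ) := by push_cast; ring
  rw [hy, ← Complex.ofReal_cpow hx.le]
  congr 1
  rw [show (-(2*(m:ℝ)+1)/2 : ℝ) = (1/2) * (-(2*(m:ℝ)+1)) by ring,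
    Real.rpow_mul hx.le, ← Real.sqrt_eq_rpow,
    show (-(2*(m:ℝ)+1)) = -((2*m+1 : ℕ):ℝ) by push_cast; ring,
    Real.rpow_neg (Real.sqrt_nonneg x), Real.rpow_natCast, one_div]

/-- The Galilean shift applied to `a_n = (2n−1)!! z^{−(2n+1)}` yields
`(2n−1)!! w(z,q)^{−(2n+1)}` where `w(z,q) = √(z²−2q)`:
`∑_{k} (q^k/k!)(2(n+k)−1)!!/z^{2(n+k)+1} = (2n−1)!!/w(z,q)^{2n+1}`. -/
theorem galilean_shift_double_factorial (z q : ℝ) (hz : 0 < z)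
    (hq : 2 * |q| < z ^ 2) (n : ℕ) :
    ∑' k : ℕ, q ^ k / (Nat.factorial k : ℝ) * (oddDF (n + k) : ℝ) / z ^ (2 * (n + k) + 1)
      = (oddDF n : ℝ) / (Real.sqrt (z ^ 2 - 2 * q)) ^ (2 * n + 1) := by
  have hr : (0:ℝ) < z^2/2 := by positivity
  have hqball : (q:ℂ) ∈ Metric.ball (0:ℂ) (z^2/2) := by
    simp only [Metric.mem_ball, Complex.dist_eq, sub_zero, Complex.norm_real, Real.norm_eq_abs]
    linarith [abs_nonneg q]
  have h0ball : (0:ℂ) ∈ Metric.ball (0:ℂ) (z^2/2) := by simpa using hr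
  have hdiff : DifferentiableOn ℂ (fun w : ℂ => ((z:ℂ)^2 - 2*w) ^ (-(2*(n:ℂ)+1)/2))
      (Metric.ball (0:ℂ) (z^2/2)) :=
    fun w hw => (aux_deriv hz n hw).differentiableAt.differentiableWithinAt
  have HT := Complex.hasSum_taylorSeries_on_ball hdiff hqball
  -- rewrite the iterated derivatives and evaluate at 0
  have hne : (oddDF n : ℂ) ≠ 0 := Nat.cast_ne_zero.mpr (oddDF_pos n).ne'
  have hval0 : ∀ k : ℕ, iteratedDeriv k
      (fun w : ℂ => ((z:ℂ)^2 - 2*w) ^ (-(2*(n:ℂ)+1)/2)) 0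
      = ((oddDF (n+k) : ℂ) / (oddDF n : ℂ)) *
        ((1 / Real.sqrt (z^2) ^ (2*(n+k)+1) : ℝ) : ℂ) := by
    intro k
    rw [aux_iter hz n k h0ball]
    congr 1
    have h1 : ((z:ℂ)^2 - 2*0) = ((z^2 : ℝ) : ℂ) := by push_cast; ring
    rw [h1]
    have h2 : ((n:ℂ)+(k:ℂ)) = ((n+k : ℕ) : ℂ) := by push_cast; ring
    rw [h2, aux_cpow_pos (by positivity) (n+k)]
  have hpos : (0:ℝ) < z^2 - 2*q := by
    have := neg_abs_le q
    nlinarith [abs_nonneg q, le_abs_self q]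
  have hvalq : ((z:ℂ)^2 - 2*(q:ℂ)) ^ (-(2*(n:ℂ)+1)/2)
      = ((1 / Real.sqrt (z^2 - 2*q) ^ (2*n+1) : ℝ) : ℂ) := by
    have h1 : ((z:ℂ)^2 - 2*(q:ℂ)) = (((z^2 - 2*q) : ℝ) : ℂ) := by push_cast; ring
    rw [h1, aux_cpow_pos hpos n]
  simp only [hval0, sub_zero, hvalq] at HT
  -- multiply by oddDF n
  have HT2 := HT.mul_left (oddDF n : ℂ)
  have hsz : Real.sqrt (z^2) = z := by
    rw [Real.sqrt_sq hz.le]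
  have hterm : ∀ k : ℕ, (oddDF n : ℂ) * ((Nat.factorial k : ℂ)⁻¹ • (q:ℂ)^k •
      (((oddDF (n+k) : ℂ) / (oddDF n : ℂ)) * ((1 / Real.sqrt (z^2) ^ (2*(n+k)+1) : ℝ) : ℂ)))
      = ((q ^ k / (Nat.factorial k : ℝ) * (oddDF (n + k) : ℝ) / z ^ (2 * (n + k) + 1) : ℝ) : ℂ) := by
    intro k
    rw [hsz]
    have hfne : ((Nat.factorial k : ℂ)) ≠ 0 := Nat.cast_ne_zero.mpr (Nat.factorial_pos k).ne'
    have hzne : (z:ℂ) ≠ 0 := by exact_mod_cast hz.ne'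
    push_cast
    simp only [smul_eq_mul]
    field_simp
  have htgt : (oddDF n : ℂ) * ((1 / Real.sqrt (z^2 - 2*q) ^ (2*n+1) : ℝ) : ℂ)
      = (((oddDF n : ℝ) / (Real.sqrt (z ^ 2 - 2 * q)) ^ (2 * n + 1) : ℝ) : ℂ) := by
    push_cast
    ring
  rw [htgt] at HT2
  simp only [smul_eq_mul] at HT2 hterm
  have HT3 : HasSum (fun k : ℕ =>
      ((q ^ k / (Nat.factorial k : ℝ) * (oddDF (n + k) : ℝ) / z ^ (2 * (n + k) + 1) : ℝ) : ℂ))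
      (((oddDF n : ℝ) / (Real.sqrt (z ^ 2 - 2 * q)) ^ (2 * n + 1) : ℝ) : ℂ) := by
    simpa only [hterm] using HT2
  have HT4 := HT3.mapL Complex.reCLM
  simp only [Complex.reCLM_apply, Complex.ofReal_re] at HT4
  exact HT4.tsum_eq
end

section
/- Define C_1(x,t) := Σ_{i≥0} ((x²/4)^{i+1} t_i)/((i+1)!(2i+1)), C_2(x,t) := (1/2) Σ_{i,j≥0} ((x²/4)^{i+j+1} t_i t_j)/(i! j! (i+j+1)), M_1(x,r) := Σ_{i≥0} (2^{i+1}(i+1)!/(2i+1)!! − 1)(−x²/4)^{i+1} r_i/(i+1)!, and M_2(x,r) := (1/2) Σ_{i,j≥0} ((−x²/4)^{i+j+1} r_i r_j)/(i! j! (i+j+1)). Then M_2(x,r) = −C_2(x, t^G(r; −x²/4)), where t^G_n(r;q) = Σ_{k≥0} (q^k/k!) r_{n+k} and r is finitely supported. -/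
/-- The Galilean shift `t^G_n(t;q) := ∑_{k} (q^k/k!) t_{n+k}`, truncated at `N`. -/
noncomputable def tG (N : ℕ) (t : ℕ → ℂ) (q : ℂ) (n : ℕ) : ℂ :=
  ∑ k ∈ Finset.range N, q ^ k / (Nat.factorial k : ℂ) * t (n + k)

/-- `C₂(x,t) := (1/2) ∑_{i,j} (x²/4)^{i+j+1} t_i t_j/(i! j! (i+j+1))`, truncated at `N`. -/
noncomputable def C2 (N : ℕ) (x : ℂ) (t : ℕ → ℂ) : ℂ :=
  (1 / 2) * ∑ i ∈ Finset.range N, ∑ j ∈ Finset.range N,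
    (x ^ 2 / 4) ^ (i + j + 1) * t i * t j /
      ((Nat.factorial i : ℂ) * (Nat.factorial j : ℂ) * ((i : ℂ) + j + 1))

/-- `M₂(x,r) := (1/2) ∑_{i,j} (−x²/4)^{i+j+1} r_i r_j/(i! j! (i+j+1))`, truncated at `N`. -/
noncomputable def M2 (N : ℕ) (x : ℂ) (r : ℕ → ℂ) : ℂ :=
  (1 / 2) * ∑ i ∈ Finset.range N, ∑ j ∈ Finset.range N,
    (-(x ^ 2 / 4)) ^ (i + j + 1) * r i * r j /
      ((Nat.factorial i : ℂ) * (Nat.factorial j : ℂ) * ((i : ℂ) + j + 1))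


section AuxM2
open Finset


lemma alt_choose_sum (n : ℕ) :
    ∑ c ∈ range (n + 1), (-1 : ℂ) ^ c * (n.choose c : ℂ) / ((c : ℂ) + 1)
      = 1 / ((n : ℂ) + 1) := by
  have h1 : ∀ c, c ≤ n → ((n.choose c : ℂ)) / ((c : ℂ) + 1)
      = ((n+1).choose (c+1) : ℂ) / ((n : ℂ) + 1) := by
    intro c _
    have := Nat.add_one_mul_choose_eq n c
    have hc : ((n.succ * n.choose c : ℕ) : ℂ) = (((n+1).choose (c+1) * (c+1) : ℕ) : ℂ) := by
      exact_mod_cast congrArg (Nat.cast : ℕ → ℂ) this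
    push_cast at hc
    have hc1 : ((c : ℂ) + 1) ≠ 0 := Nat.cast_add_one_ne_zero c
    have hn1 : ((n : ℂ) + 1) ≠ 0 := Nat.cast_add_one_ne_zero n
    field_simp
    linear_combination hc
  have h2 : ∑ c ∈ range (n + 1), (-1 : ℂ) ^ c * ((n+1).choose (c+1) : ℂ) = 1 := by
    have h3 : (∑ m ∈ range (n + 2), ((-1) ^ m * (n+1).choose m : ℤ)) = 0 :=
      Int.alternating_sum_range_choose_of_ne (Nat.succ_ne_zero n)
    have h4 : (∑ m ∈ range (n + 2), ((-1:ℂ) ^ m * ((n+1).choose m : ℂ))) = 0 := by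
      exact_mod_cast congrArg (Int.cast : ℤ → ℂ) h3
    rw [Finset.sum_range_succ'] at h4
    simp only [pow_succ] at h4
    have : ∑ c ∈ range (n+1), (-1:ℂ)^c * (-1) * ((n+1).choose (c+1) : ℂ)
        = - ∑ c ∈ range (n+1), (-1:ℂ)^c * ((n+1).choose (c+1) : ℂ) := by
      rw [← Finset.sum_neg_distrib]; apply Finset.sum_congr rfl; intros; ring
    rw [this] at h4
    simp only [Nat.choose_zero_right, Nat.cast_one, mul_one, one_mul] at h4
    linear_combination -h4
  calc ∑ c ∈ range (n + 1), (-1 : ℂ) ^ c * (n.choose c : ℂ) / ((c : ℂ) + 1)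
      = ∑ c ∈ range (n + 1), (-1 : ℂ) ^ c * (((n+1).choose (c+1) : ℂ) / ((n : ℂ) + 1)) := by
        apply Finset.sum_congr rfl
        intro c hc
        rw [mul_div_assoc, h1 c (Nat.lt_succ_iff.mp (mem_range.mp hc))]
    _ = (∑ c ∈ range (n + 1), (-1 : ℂ) ^ c * ((n+1).choose (c+1) : ℂ)) / ((n : ℂ) + 1) := by
        rw [Finset.sum_div]; apply Finset.sum_congr rfl; intros; ring
    _ = 1 / ((n : ℂ) + 1) := by rw [h2]



lemma group_diag (n : ℕ) (f : ℕ → ℕ → ℂ) (hf : ∀ a b, n ≤ a + b → f a b = 0) :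
    ∑ a ∈ range n, ∑ b ∈ range n, f a b
      = ∑ c ∈ range n, ∑ k ∈ range (c + 1), f k (c - k) := by
  have step1 : ∀ a ∈ range n, ∑ b ∈ range n, f a b = ∑ b ∈ range (n - a), f a b := by
    intro a ha
    refine (Finset.sum_subset (Finset.range_subset_range.mpr (by omega)) ?_).symm
    intro b _ hb
    exact hf a b (by simp only [mem_range] at hb ⊢; omega)
  rw [Finset.sum_congr rfl step1]
  rw [Finset.sum_sigma', Finset.sum_sigma']
  refine Finset.sum_nbij' (i := fun x ↦ (⟨x.1 + x.2, x.1⟩ : (_ : ℕ) × ℕ))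
    (j := fun x ↦ (⟨x.2, x.1 - x.2⟩ : (_ : ℕ) × ℕ)) ?_ ?_ ?_ ?_ ?_ <;>
    simp only [Finset.mem_sigma, Finset.mem_range, Sigma.forall] <;>
    intro a b hab
  · omega
  · omega
  · simp only [Nat.add_sub_cancel_left]
  · have h : b + (a - b) = a := by omega
    rw [h]
  · simp only [Nat.add_sub_cancel_left]

lemma vand_alt (i j : ℕ) :
    ∑ a ∈ range (i + j + 1), ∑ b ∈ range (i + j + 1),
        (-1 : ℂ) ^ (a + b) * (i.choose a : ℂ) * (j.choose b : ℂ) / (((a:ℕ) + b : ℕ) + 1 : ℂ)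
      = 1 / ((i : ℂ) + (j : ℂ) + 1) := by
  rw [group_diag]
  · have inner : ∀ c ∈ range (i + j + 1),
        ∑ k ∈ range (c + 1),
            (-1 : ℂ) ^ (k + (c - k)) * (i.choose k : ℂ) * (j.choose (c - k) : ℂ)
              / (((k:ℕ) + (c - k) : ℕ) + 1 : ℂ)
          = (-1 : ℂ) ^ c * ((i + j).choose c : ℂ) / ((c : ℂ) + 1) := by
      intro c _
      have hv : ((i + j).choose c : ℂ) = ∑ k ∈ range (c + 1), (i.choose k : ℂ) * (j.choose (c - k) : ℂ) := by
        rw [Nat.add_choose_eq]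
        rw [Finset.Nat.sum_antidiagonal_eq_sum_range_succ_mk]
        push_cast
        rfl
      rw [hv, Finset.mul_sum, Finset.sum_div]
      apply Finset.sum_congr rfl
      intro k hk
      have hkc : k + (c - k) = c := by simp only [mem_range] at hk; omega
      rw [hkc]
      ring
    rw [Finset.sum_congr rfl inner]
    have h := alt_choose_sum (i + j)
    push_cast at h ⊢
    exact h
  · intro a b hab
    have : i.choose a = 0 ∨ j.choose b = 0 := by
      rcases Nat.lt_or_ge i a with h | h
      · exact Or.inl (Nat.choose_eq_zero_of_lt h)
      · exact Or.inr (Nat.choose_eq_zero_of_lt (by omega))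
    rcases this with h | h <;> simp [h]



lemma fact_ne (n : ℕ) : ((n.factorial : ℂ)) ≠ 0 := by
  exact_mod_cast Nat.factorial_ne_zero n

lemma abone_ne (a b : ℕ) : ((a : ℂ) + (b : ℂ) + 1) ≠ 0 := by
  have := Nat.cast_add_one_ne_zero (R := ℂ) (a + b)
  push_cast at this
  intro h; apply this; linear_combination h

lemma fact_sum (i j : ℕ) :
    ∑ a ∈ range (i + 1), ∑ b ∈ range (j + 1),
        (-1 : ℂ) ^ (a + b) / ((a.factorial : ℂ) * (b.factorial : ℂ) *
          ((i - a).factorial : ℂ) * ((j - b).factorial : ℂ) * ((a : ℂ) + (b : ℂ) + 1))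
      = 1 / ((i.factorial : ℂ) * (j.factorial : ℂ) * ((i : ℂ) + (j : ℂ) + 1)) := by
  have hv := vand_alt i j
  -- shrink ranges in hv
  have shrink1 : ∀ a ∈ range (i + j + 1),
      ∑ b ∈ range (i + j + 1),
          (-1 : ℂ) ^ (a + b) * (i.choose a : ℂ) * (j.choose b : ℂ) / (((a : ℕ) + b : ℕ) + 1 : ℂ)
        = ∑ b ∈ range (j + 1),
          (-1 : ℂ) ^ (a + b) * (i.choose a : ℂ) * (j.choose b : ℂ) / (((a : ℕ) + b : ℕ) + 1 : ℂ) := by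
    intro a _
    refine (Finset.sum_subset (Finset.range_subset_range.mpr (by omega)) ?_).symm
    intro b _ hb
    have : j.choose b = 0 := Nat.choose_eq_zero_of_lt (by simp only [mem_range] at hb; omega)
    simp [this]
  rw [Finset.sum_congr rfl shrink1] at hv
  have shrink2 : ∑ a ∈ range (i + j + 1), ∑ b ∈ range (j + 1),
          (-1 : ℂ) ^ (a + b) * (i.choose a : ℂ) * (j.choose b : ℂ) / (((a : ℕ) + b : ℕ) + 1 : ℂ)
      = ∑ a ∈ range (i + 1), ∑ b ∈ range (j + 1),
          (-1 : ℂ) ^ (a + b) * (i.choose a : ℂ) * (j.choose b : ℂ) / (((a : ℕ) + b : ℕ) + 1 : ℂ) := by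
    refine (Finset.sum_subset (Finset.range_subset_range.mpr (by omega)) ?_).symm
    intro a _ ha
    have : i.choose a = 0 := Nat.choose_eq_zero_of_lt (by simp only [mem_range] at ha; omega)
    simp [this]
  rw [shrink2] at hv
  have key : ∀ a ∈ range (i + 1), ∀ b ∈ range (j + 1),
      (-1 : ℂ) ^ (a + b) / ((a.factorial : ℂ) * (b.factorial : ℂ) *
          ((i - a).factorial : ℂ) * ((j - b).factorial : ℂ) * ((a : ℂ) + (b : ℂ) + 1))
        = ((-1 : ℂ) ^ (a + b) * (i.choose a : ℂ) * (j.choose b : ℂ) / (((a : ℕ) + b : ℕ) + 1 : ℂ))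
            / ((i.factorial : ℂ) * (j.factorial : ℂ)) := by
    intro a ha b hb
    have hai : a ≤ i := Nat.lt_succ_iff.mp (mem_range.mp ha)
    have hbj : b ≤ j := Nat.lt_succ_iff.mp (mem_range.mp hb)
    rw [Nat.cast_choose ℂ hai, Nat.cast_choose ℂ hbj]
    have h1 := fact_ne a
    have h2 := fact_ne b
    have h3 := fact_ne (i - a)
    have h4 := fact_ne (j - b)
    have h5 := fact_ne i
    have h6 := fact_ne j
    have h7 := abone_ne a b
    push_cast
    push_cast at h7
    have hP : ((a.factorial : ℂ) * (b.factorial : ℂ) * ((i - a).factorial : ℂ) *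
        ((j - b).factorial : ℂ) * ((a : ℂ) + (b : ℂ) + 1)) ≠ 0 :=
      mul_ne_zero (mul_ne_zero (mul_ne_zero (mul_ne_zero h1 h2) h3) h4) h7
    rw [div_eq_div_iff hP (mul_ne_zero h5 h6)]
    field_simp
  calc ∑ a ∈ range (i + 1), ∑ b ∈ range (j + 1),
        (-1 : ℂ) ^ (a + b) / ((a.factorial : ℂ) * (b.factorial : ℂ) *
          ((i - a).factorial : ℂ) * ((j - b).factorial : ℂ) * ((a : ℂ) + (b : ℂ) + 1))
      = ∑ a ∈ range (i + 1), ∑ b ∈ range (j + 1),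
        ((-1 : ℂ) ^ (a + b) * (i.choose a : ℂ) * (j.choose b : ℂ) / (((a : ℕ) + b : ℕ) + 1 : ℂ))
            / ((i.factorial : ℂ) * (j.factorial : ℂ)) := by
        exact Finset.sum_congr rfl fun a ha => Finset.sum_congr rfl (key a ha)
    _ = (∑ a ∈ range (i + 1), ∑ b ∈ range (j + 1),
        (-1 : ℂ) ^ (a + b) * (i.choose a : ℂ) * (j.choose b : ℂ) / (((a : ℕ) + b : ℕ) + 1 : ℂ))
            / ((i.factorial : ℂ) * (j.factorial : ℂ)) := by
        simp only [← Finset.sum_div]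
    _ = (1 / ((i : ℂ) + (j : ℂ) + 1)) / ((i.factorial : ℂ) * (j.factorial : ℂ)) := by rw [hv]
    _ = 1 / ((i.factorial : ℂ) * (j.factorial : ℂ) * ((i : ℂ) + (j : ℂ) + 1)) := by
        rw [div_div]; ring_nf

lemma tG_eq (N : ℕ) (r : ℕ → ℂ) (hr : ∀ n, N ≤ n → r n = 0) (s : ℂ) (a : ℕ) (ha : a < N) :
    tG N r s a = ∑ i ∈ range N,
      (if a ≤ i then s ^ (i - a) / (((i - a).factorial : ℂ)) * r i else 0) := by
  set g : ℕ → ℂ := fun m => if a ≤ m then s ^ (m - a) / (((m - a).factorial : ℂ)) * r m else 0 with hg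
  have h1 : tG N r s a = ∑ k ∈ range N, g (a + k) := by
    unfold tG
    apply Finset.sum_congr rfl
    intro k _
    simp only [hg, if_pos (Nat.le_add_right a k), Nat.add_sub_cancel_left]
  rw [h1]
  have h2 : ∑ k ∈ range N, g (a + k) = ∑ m ∈ Finset.Ico a (a + N), g m := by
    rw [Finset.sum_Ico_eq_sum_range]
    simp only [Nat.add_sub_cancel_left]
  rw [h2]
  have h3 : ∑ m ∈ Finset.Ico a (a + N), g m
      = ∑ m ∈ Finset.Ico a N, g m + ∑ m ∈ Finset.Ico N (a + N), g m := by
    rw [Finset.sum_Ico_consecutive _ (by omega) (by omega)]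
  rw [h3]
  have h4 : ∑ m ∈ Finset.Ico N (a + N), g m = 0 := by
    apply Finset.sum_eq_zero
    intro m hm
    have : r m = 0 := hr m (by simp only [Finset.mem_Ico] at hm; omega)
    simp [hg, this]
  rw [h4, add_zero]
  refine Finset.sum_subset ?_ ?_
  · intro m hm; simp only [Finset.mem_Ico, Finset.mem_range] at *; omega
  · intro m _ hm
    simp only [Finset.mem_Ico, Finset.mem_range] at *
    have : ¬ a ≤ m := by omega
    exact if_neg this

lemma pair (N i j : ℕ) (hi : i < N) (hj : j < N) (s ri rj : ℂ) :
    ∑ a ∈ range N, ∑ b ∈ range N,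
      (-s) ^ (a + b + 1) * (if a ≤ i then s ^ (i - a) / (((i - a).factorial : ℂ)) * ri else 0)
        * (if b ≤ j then s ^ (j - b) / (((j - b).factorial : ℂ)) * rj else 0)
        / ((a.factorial : ℂ) * (b.factorial : ℂ) * ((a : ℂ) + b + 1))
    = -(s ^ (i + j + 1) * ri * rj /
        ((i.factorial : ℂ) * (j.factorial : ℂ) * ((i : ℂ) + j + 1))) := by
  have houter : ∑ a ∈ range N, (∑ b ∈ range N,
      (-s) ^ (a + b + 1) * (if a ≤ i then s ^ (i - a) / (((i - a).factorial : ℂ)) * ri else 0)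
        * (if b ≤ j then s ^ (j - b) / (((j - b).factorial : ℂ)) * rj else 0)
        / ((a.factorial : ℂ) * (b.factorial : ℂ) * ((a : ℂ) + b + 1)))
      = ∑ a ∈ range (i + 1), (∑ b ∈ range N,
      (-s) ^ (a + b + 1) * (if a ≤ i then s ^ (i - a) / (((i - a).factorial : ℂ)) * ri else 0)
        * (if b ≤ j then s ^ (j - b) / (((j - b).factorial : ℂ)) * rj else 0)
        / ((a.factorial : ℂ) * (b.factorial : ℂ) * ((a : ℂ) + b + 1))) := by
    refine (Finset.sum_subset (Finset.range_subset_range.mpr (by omega)) ?_).symm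
    intro a _ ha
    have : ¬ a ≤ i := by simp only [mem_range] at ha; omega
    apply Finset.sum_eq_zero
    intro b _
    simp [this]
  rw [houter]
  have hinner : ∀ a ∈ range (i + 1), (∑ b ∈ range N,
      (-s) ^ (a + b + 1) * (if a ≤ i then s ^ (i - a) / (((i - a).factorial : ℂ)) * ri else 0)
        * (if b ≤ j then s ^ (j - b) / (((j - b).factorial : ℂ)) * rj else 0)
        / ((a.factorial : ℂ) * (b.factorial : ℂ) * ((a : ℂ) + b + 1)))
      = ∑ b ∈ range (j + 1),
      (-s) ^ (a + b + 1) * (if a ≤ i then s ^ (i - a) / (((i - a).factorial : ℂ)) * ri else 0)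
        * (if b ≤ j then s ^ (j - b) / (((j - b).factorial : ℂ)) * rj else 0)
        / ((a.factorial : ℂ) * (b.factorial : ℂ) * ((a : ℂ) + b + 1)) := by
    intro a _
    refine (Finset.sum_subset (Finset.range_subset_range.mpr (by omega)) ?_).symm
    intro b _ hb
    have : ¬ b ≤ j := by simp only [mem_range] at hb; omega
    simp [this]
  rw [Finset.sum_congr rfl hinner]
  have stage1 : ∀ a ∈ range (i + 1), ∀ b ∈ range (j + 1),
      (-s) ^ (a + b + 1) * (if a ≤ i then s ^ (i - a) / (((i - a).factorial : ℂ)) * ri else 0)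
        * (if b ≤ j then s ^ (j - b) / (((j - b).factorial : ℂ)) * rj else 0)
        / ((a.factorial : ℂ) * (b.factorial : ℂ) * ((a : ℂ) + b + 1))
      = (-(s ^ (i + j + 1) * ri * rj)) *
          ((-1 : ℂ) ^ (a + b) / ((a.factorial : ℂ) * (b.factorial : ℂ) *
            ((i - a).factorial : ℂ) * ((j - b).factorial : ℂ) * ((a : ℂ) + (b : ℂ) + 1))) := by
    intro a ha b hb
    have hai : a ≤ i := Nat.lt_succ_iff.mp (mem_range.mp ha)
    have hbj : b ≤ j := Nat.lt_succ_iff.mp (mem_range.mp hb)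
    rw [if_pos hai, if_pos hbj]
    have hs : s ^ a * s ^ (i - a) * (s ^ b * s ^ (j - b)) = s ^ i * s ^ j := by
      rw [← pow_add, ← pow_add, ← pow_add, ← pow_add]
      congr 1
      omega
    have hneg : (-s) ^ (a + b + 1) = -((-1 : ℂ) ^ a * (-1 : ℂ) ^ b * (s ^ a * s ^ b * s)) := by
      rw [neg_pow, pow_add, pow_add, pow_one, pow_add, pow_add, pow_one]
      ring
    have hsij : s ^ (i + j + 1) = s ^ i * s ^ j * s := by
      rw [pow_add, pow_add, pow_one]
    have hab : (-1 : ℂ) ^ (a + b) = (-1 : ℂ) ^ a * (-1 : ℂ) ^ b := pow_add _ _ _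
    rw [hneg, hsij, ← hs, hab]
    simp only [div_eq_mul_inv, mul_inv]
    ring
  rw [Finset.sum_congr rfl fun a ha => Finset.sum_congr rfl (stage1 a ha)]
  simp only [← Finset.mul_sum]
  rw [fact_sum i j]
  ring



lemma expand_mul (A D : ℂ) (U V : ℕ → ℂ) (s1 s2 : Finset ℕ) :
    A * (∑ i ∈ s1, U i) * (∑ j ∈ s2, V j) / D = ∑ i ∈ s1, ∑ j ∈ s2, A * U i * V j / D := by
  rw [mul_assoc, Finset.sum_mul_sum, Finset.mul_sum, Finset.sum_div]
  refine Finset.sum_congr rfl fun i _ => ?_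
  rw [Finset.mul_sum, Finset.sum_div]
  refine Finset.sum_congr rfl fun j _ => ?_
  ring

lemma T_eq (N : ℕ) (s : ℂ) (r : ℕ → ℂ) (hr : ∀ n, N ≤ n → r n = 0) :
    ∑ a ∈ range N, ∑ b ∈ range N, (-s) ^ (a + b + 1) * tG N r s a * tG N r s b /
        ((a.factorial : ℂ) * (b.factorial : ℂ) * ((a : ℂ) + b + 1))
      = - ∑ i ∈ range N, ∑ j ∈ range N, s ^ (i + j + 1) * r i * r j /
        ((i.factorial : ℂ) * (j.factorial : ℂ) * ((i : ℂ) + j + 1)) := by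
  have step1 : ∀ a ∈ range N, ∀ b ∈ range N,
      (-s) ^ (a + b + 1) * tG N r s a * tG N r s b /
        ((a.factorial : ℂ) * (b.factorial : ℂ) * ((a : ℂ) + b + 1))
      = ∑ i ∈ range N, ∑ j ∈ range N,
        (-s) ^ (a + b + 1) * (if a ≤ i then s ^ (i - a) / (((i - a).factorial : ℂ)) * r i else 0)
          * (if b ≤ j then s ^ (j - b) / (((j - b).factorial : ℂ)) * r j else 0)
          / ((a.factorial : ℂ) * (b.factorial : ℂ) * ((a : ℂ) + b + 1)) := by
    intro a ha b hb
    rw [tG_eq N r hr s a (mem_range.mp ha), tG_eq N r hr s b (mem_range.mp hb)]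
    exact expand_mul _ _ _ _ _ _
  rw [Finset.sum_congr rfl fun a ha => Finset.sum_congr rfl (step1 a ha)]
  have swap : ∑ a ∈ range N, ∑ b ∈ range N, ∑ i ∈ range N, ∑ j ∈ range N,
        (-s) ^ (a + b + 1) * (if a ≤ i then s ^ (i - a) / (((i - a).factorial : ℂ)) * r i else 0)
          * (if b ≤ j then s ^ (j - b) / (((j - b).factorial : ℂ)) * r j else 0)
          / ((a.factorial : ℂ) * (b.factorial : ℂ) * ((a : ℂ) + b + 1))
      = ∑ i ∈ range N, ∑ j ∈ range N, ∑ a ∈ range N, ∑ b ∈ range N,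
        (-s) ^ (a + b + 1) * (if a ≤ i then s ^ (i - a) / (((i - a).factorial : ℂ)) * r i else 0)
          * (if b ≤ j then s ^ (j - b) / (((j - b).factorial : ℂ)) * r j else 0)
          / ((a.factorial : ℂ) * (b.factorial : ℂ) * ((a : ℂ) + b + 1)) := by
    calc _ = ∑ a ∈ range N, ∑ i ∈ range N, ∑ b ∈ range N, ∑ j ∈ range N, _ :=
          Finset.sum_congr rfl fun a _ => Finset.sum_comm
      _ = ∑ i ∈ range N, ∑ a ∈ range N, ∑ b ∈ range N, ∑ j ∈ range N, _ := Finset.sum_comm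
      _ = ∑ i ∈ range N, ∑ a ∈ range N, ∑ j ∈ range N, ∑ b ∈ range N, _ :=
          Finset.sum_congr rfl fun i _ => Finset.sum_congr rfl fun a _ => Finset.sum_comm
      _ = ∑ i ∈ range N, ∑ j ∈ range N, ∑ a ∈ range N, ∑ b ∈ range N, _ :=
          Finset.sum_congr rfl fun i _ => Finset.sum_comm
  rw [swap]
  rw [Finset.sum_congr rfl fun i hi => Finset.sum_congr rfl fun j hj =>
    pair N i j (mem_range.mp hi) (mem_range.mp hj) s (r i) (r j)]
  simp only [Finset.sum_neg_distrib]


end AuxM2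

/-- `M₂(x,r) = −C₂(x, t^G(r; −x²/4))` for finitely supported `r`. -/
theorem M2_eq_neg_C2_shift (N : ℕ) (x : ℂ) (r : ℕ → ℂ)
    (hr : ∀ n, N ≤ n → r n = 0) :
    M2 N x r = -C2 N x (tG N r (-(x ^ 2 / 4))) := by
  unfold M2 C2
  have h := T_eq N (-(x ^ 2 / 4)) r hr
  simp only [neg_neg] at h
  rw [h]
  ring
end
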